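/- The monic polynomials p_{2j}(x) = x^{2j} and p_{2j+1}(x) = x^{2j+1} - 2j·x^{2j-1} are skew-orthogonal with respect to the inner product ⟨f,g⟩ = (1/2)∫_{-∞}^{∞}∫_{-∞}^{∞} e^{-(x²+y²)/2} f(x) g(y) sgn(y-x) dx dy restricted to the real-real part; specifically ⟨p_{2j}, p_{2k}⟩ = 0 and ⟨p_{2j+1}, p_{2k+1}⟩ = 0 for all j,k, where sgn is the sign function. -/
import Mathlib


open MeasureTheory Real

/-- The skew-symmetric inner product
`⟨f,g⟩ = (1/2)∫∫ e^{-(x²+y²)/2} f(x) g(y) sgn(y-x) dx dy`. -/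
noncomputable def skewInner (f g : ℝ → ℝ) : ℝ :=
  (1 / 2) * ∫ x : ℝ, ∫ y : ℝ,
    Real.exp (-(x ^ 2 + y ^ 2) / 2) * f x * g y * Real.sign (y - x)

/-- The even-indexed GinOE skew-orthogonal polynomial `p_{2j}(x) = x^{2j}`. -/
def pEven (j : ℕ) : ℝ → ℝ := fun x => x ^ (2 * j)

/-- The odd-indexed GinOE skew-orthogonal polynomial
`p_{2j+1}(x) = x^{2j+1} - 2j x^{2j-1}`. -/
def pOdd (j : ℕ) : ℝ → ℝ := fun x => x ^ (2 * j + 1) - (2 * j : ℝ) * x ^ (2 * j - 1)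

lemma skewInner_eq_zero_of_parity (f g : ℝ → ℝ)
    (h : ∀ x y : ℝ, f (-x) * g (-y) = f x * g y) : skewInner f g = 0 := by
  set F : ℝ → ℝ := fun x => ∫ y : ℝ,
    Real.exp (-(x ^ 2 + y ^ 2) / 2) * f x * g y * Real.sign (y - x) with hF
  have hodd : ∀ x : ℝ, F (-x) = - F x := by
    intro x
    have h1 : F (-x) = ∫ y : ℝ,
        Real.exp (-((-x) ^ 2 + (-y) ^ 2) / 2) * f (-x) * g (-y) * Real.sign (-y - (-x)) := by
      rw [hF]
      exact (MeasureTheory.integral_neg_eq_self (fun y =>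
        Real.exp (-((-x) ^ 2 + y ^ 2) / 2) * f (-x) * g y * Real.sign (y - (-x))) volume).symm
    rw [h1]
    have h2 : ∀ y : ℝ,
        Real.exp (-((-x) ^ 2 + (-y) ^ 2) / 2) * f (-x) * g (-y) * Real.sign (-y - (-x))
          = -(Real.exp (-(x ^ 2 + y ^ 2) / 2) * f x * g y * Real.sign (y - x)) := by
      intro y
      have hx : (-x) ^ 2 = x ^ 2 := by ring
      have hy : (-y) ^ 2 = y ^ 2 := by ring
      have hs : Real.sign (-y - (-x)) = - Real.sign (y - x) := by
        rw [show -y - (-x) = -(y - x) by ring, Real.sign_neg]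
      rw [hx, hy, hs]
      linear_combination (-(Real.exp (-(x ^ 2 + y ^ 2) / 2) * Real.sign (y - x))) * h x y
    rw [show (fun y : ℝ =>
        Real.exp (-((-x) ^ 2 + (-y) ^ 2) / 2) * f (-x) * g (-y) * Real.sign (-y - (-x)))
        = fun y : ℝ => -(Real.exp (-(x ^ 2 + y ^ 2) / 2) * f x * g y * Real.sign (y - x))
        from funext h2]
    rw [MeasureTheory.integral_neg]
  have hint : (∫ x : ℝ, F x) = 0 := by
    have h3 : (∫ x : ℝ, F (-x)) = ∫ x : ℝ, F x := MeasureTheory.integral_neg_eq_self F volume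
    have h4 : (∫ x : ℝ, F (-x)) = - ∫ x : ℝ, F x := by
      rw [show (fun x : ℝ => F (-x)) = fun x => -F x from funext hodd,
        MeasureTheory.integral_neg]
    linarith [h3, h4.symm.trans h3]
  rw [skewInner, ← hF]
  simp [hint]

lemma pEven_neg (j : ℕ) (x : ℝ) : pEven j (-x) = pEven j x := by
  simp only [pEven]
  rw [pow_mul, pow_mul, neg_sq]

lemma pOdd_neg (j : ℕ) (x : ℝ) : pOdd j (-x) = - pOdd j x := by
  cases j with
  | zero => simp [pOdd]
  | succ n =>
    simp only [pOdd]
    rw [Odd.neg_pow ⟨n + 1, by ring⟩, Odd.neg_pow (n := 2 * (n + 1) - 1) ⟨n, by omega⟩]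
    ring

/-- `⟨p_{2j}, p_{2k}⟩ = 0` and `⟨p_{2j+1}, p_{2k+1}⟩ = 0` for all `j, k`. -/
theorem skewInner_same_parity_eq_zero (j k : ℕ) :
    skewInner (pEven j) (pEven k) = 0 ∧ skewInner (pOdd j) (pOdd k) = 0 := by
  constructor
  · exact skewInner_eq_zero_of_parity _ _ (fun x y => by rw [pEven_neg, pEven_neg])
  · exact skewInner_eq_zero_of_parity _ _ (fun x y => by rw [pOdd_neg, pOdd_neg]; ring)
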